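/- Assume additionally that μ := m ∑_{n≥1} g H^n 1^t < ∞. Then the dual triplet satisfies the Perron–Frobenius equation at 1/ρ: m̂ ∑_{n≥1} ρ^n ĝ Ĥ^n 1^t = 1, where Ĥ = (ĥ_{ij}). -/

import Mathlib

/-- Right action of an infinite matrix on a column vector: `(H y)_i = ∑_j H_{ij} y_j`. -/
noncomputable def matVec (H : ℕ → ℕ → ℝ) (y : ℕ → ℝ) : ℕ → ℝ := fun i => ∑' j, H i j * y j

/-- `k`-fold right action: `(H^k y)_i`. -/
noncomputable def matPow (H : ℕ → ℕ → ℝ) : ℕ → (ℕ → ℝ) → ℕ → ℝ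
  | 0, y => y
  | k + 1, y => matVec H (matPow H k y)

/-- Left action of an infinite matrix on a row vector: `(x H)_j = ∑_i x_i H_{ij}`. -/
noncomputable def vecMat (x : ℕ → ℝ) (H : ℕ → ℕ → ℝ) : ℕ → ℝ := fun j => ∑' i, x i * H i j

/-- `k`-fold left action: `(x H^k)_j`. -/
noncomputable def vecPow (x : ℕ → ℝ) (H : ℕ → ℕ → ℝ) : ℕ → ℕ → ℝ
  | 0 => x
  | k + 1 => vecMat (vecPow x H k) H

section Aux

variable {x : ℕ → ℝ} {F : ℕ → ℕ → ℝ}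

/-- Summability of the double family `x_i F_{ij}`. -/
lemma aux_summable_uncurry
    (hx : ∀ i, 0 ≤ x i) (hF : ∀ i j, 0 ≤ F i j)
    (hxs : Summable x) (hFs : ∀ i, Summable (F i)) (hFb : ∀ i, ∑' j, F i j ≤ 1) :
    Summable (fun p : ℕ × ℕ => x p.1 * F p.1 p.2) := by
  refine (summable_prod_of_nonneg (fun p => mul_nonneg (hx _) (hF _ _))).mpr
    ⟨fun i => by simpa using (hFs i).mul_left (x i), ?_⟩
  apply hxs.of_nonneg_of_le
  · intro i; exact tsum_nonneg fun j => mul_nonneg (hx _) (hF _ _)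
  · intro i
    show ∑' j, x i * F i j ≤ x i
    rw [tsum_mul_left]
    calc x i * ∑' j, F i j ≤ x i * 1 := mul_le_mul_of_nonneg_left (hFb i) (hx i)
      _ = x i := mul_one _

lemma aux_summable_col
    (hx : ∀ i, 0 ≤ x i) (hF : ∀ i j, 0 ≤ F i j)
    (hxs : Summable x) (hFs : ∀ i, Summable (F i)) (hFb : ∀ i, ∑' j, F i j ≤ 1) :
    Summable (fun j => ∑' i, x i * F i j) := by
  have h := (aux_summable_uncurry hx hF hxs hFs hFb).prod_symm
  have h2 := (summable_prod_of_nonneg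
    (f := fun p : ℕ × ℕ => x p.2 * F p.2 p.1)
    (fun p => mul_nonneg (hx _) (hF _ _))).mp h
  exact h2.2

lemma aux_tsum_swap
    (hx : ∀ i, 0 ≤ x i) (hF : ∀ i j, 0 ≤ F i j)
    (hxs : Summable x) (hFs : ∀ i, Summable (F i)) (hFb : ∀ i, ∑' j, F i j ≤ 1) :
    ∑' j, ∑' i, x i * F i j = ∑' i, x i * ∑' j, F i j := by
  have h := aux_summable_uncurry hx hF hxs hFs hFb
  have := Summable.tsum_comm (f := fun i j => x i * F i j) h
  rw [this]
  exact tsum_congr fun i => tsum_mul_left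

end Aux

/-- if `μ := m ∑_{n≥1} g H^n 1^t < ∞`, then the dual triplet satisfies the
Perron–Frobenius equation at `1/ρ`: `m̂ ∑_{n≥1} ρ^n ĝ Ĥ^n 1^t = 1`, where
`m̂ = (1+m-ρ)/ρ`, `ĝ_j = m g_j q_j/(1+m-ρ)` and `ĥ_{ij} = h_{ij} q_j/(q_i ρ)`. -/
theorem dual_PF_equation
    (H : ℕ → ℕ → ℝ) (g q : ℕ → ℝ) (m ρ : ℝ)
    (hH : ∀ i j, 0 ≤ H i j) (hHsum : ∀ i, Summable (H i)) (hHrow : ∀ i, ∑' j, H i j ≤ 1)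
    (hg : ∀ j, 0 ≤ g j) (hgsum : Summable g) (hg1 : ∑' j, g j = 1)
    (hm : 0 < m) (hρ1 : 1 < ρ) (hρm : ρ < 1 + m)
    (hq0 : ∀ i, 0 < q i) (hq1 : ∀ i, q i < 1)
    (hHq : ∀ i, ∑' j, H i j * q j = ρ * ((∑' j, H i j) - 1 + q i))
    (hgq : ∑' j, g j * q j = (1 + m - ρ) / m)
    (hμfin : Summable fun n : ℕ => ∑' j, vecPow g H (n + 1) j) :
    (1 + m - ρ) / ρ
        * ∑' n : ℕ, ρ ^ (n + 1)
            * ∑' j, vecPow (fun l => m * g l * q l / (1 + m - ρ))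
                (fun i' j' => H i' j' * q j' / (q i' * ρ)) (n + 1) j
      = 1 := by
  have hρ0 : (0:ℝ) < ρ := lt_trans one_pos hρ1
  have hρne : ρ ≠ 0 := ne_of_gt hρ0
  have hmρ : (0:ℝ) < 1 + m - ρ := by linarith
  -- nonnegativity and summability of vecPow g H n
  have hP : ∀ n, (∀ j, 0 ≤ vecPow g H n j) ∧ Summable (vecPow g H n) := by
    intro n
    induction n with
    | zero => exact ⟨hg, hgsum⟩
    | succ k ih =>
      refine ⟨fun j => tsum_nonneg fun i => mul_nonneg (ih.1 i) (hH i j), ?_⟩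
      exact aux_summable_col ih.1 hH ih.2 hHsum hHrow
  -- the key scalar sequences
  set a : ℕ → ℝ := fun n => ∑' j, vecPow g H n j * q j with ha_def
  set s : ℕ → ℝ := fun n => ∑' j, vecPow g H n j with hs_def
  have hq1' : ∀ j, q j ≤ 1 := fun j => le_of_lt (hq1 j)
  have hqnn : ∀ j, 0 ≤ q j := fun j => le_of_lt (hq0 j)
  -- summable (x_i * q_i) for nonneg summable x
  have haq : ∀ n, Summable (fun j => vecPow g H n j * q j) := by
    intro n
    apply (hP n).2.of_nonneg_of_le (fun j => mul_nonneg ((hP n).1 j) (hqnn j))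
    intro j
    calc vecPow g H n j * q j ≤ vecPow g H n j * 1 :=
          mul_le_mul_of_nonneg_left (hq1' j) ((hP n).1 j)
      _ = vecPow g H n j := mul_one _
  -- s recursion
  have hs_rec : ∀ n, s (n + 1) = ∑' i, vecPow g H n i * ∑' j, H i j := by
    intro n
    show (∑' j, vecMat (vecPow g H n) H j) = _
    simp only [vecMat]
    exact aux_tsum_swap (hP n).1 hH (hP n).2 hHsum hHrow
  -- auxiliary summabilities over i
  have hsumrow : ∀ n, Summable (fun i => vecPow g H n i * ∑' j, H i j) := by
    intro n
    apply (hP n).2.of_nonneg_of_le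
      (fun i => mul_nonneg ((hP n).1 i) (tsum_nonneg fun j => hH i j))
    intro i
    calc vecPow g H n i * ∑' j, H i j ≤ vecPow g H n i * 1 :=
          mul_le_mul_of_nonneg_left (hHrow i) ((hP n).1 i)
      _ = vecPow g H n i := mul_one _
  -- a recursion : a (n+1) = ρ * (s (n+1) - s n + a n)
  have ha_rec : ∀ n, a (n + 1) = ρ * (s (n + 1) - s n + a n) := by
    intro n
    have hHq' : ∀ i j, 0 ≤ H i j * q j := fun i j => mul_nonneg (hH i j) (hqnn j)
    have hHqs : ∀ i, Summable (fun j => H i j * q j) := by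
      intro i
      apply (hHsum i).of_nonneg_of_le (hHq' i)
      intro j
      calc H i j * q j ≤ H i j * 1 := mul_le_mul_of_nonneg_left (hq1' j) (hH i j)
        _ = H i j := mul_one _
    have hHqb : ∀ i, ∑' j, H i j * q j ≤ 1 := by
      intro i
      refine le_trans (Summable.tsum_le_tsum ?_ (hHqs i) (hHsum i)) (hHrow i)
      intro j
      calc H i j * q j ≤ H i j * 1 := mul_le_mul_of_nonneg_left (hq1' j) (hH i j)
        _ = H i j := mul_one _
    have step1 : a (n + 1) = ∑' j, ∑' i, vecPow g H n i * (H i j * q j) := by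
      show (∑' j, vecMat (vecPow g H n) H j * q j) = _
      refine tsum_congr fun j => ?_
      simp only [vecMat]
      rw [← tsum_mul_right]
      exact tsum_congr fun i => by ring
    rw [step1, aux_tsum_swap (hP n).1 hHq' (hP n).2 hHqs hHqb]
    have step2 : ∀ i, vecPow g H n i * ∑' j, H i j * q j
        = ρ * (vecPow g H n i * (∑' j, H i j) - vecPow g H n i + vecPow g H n i * q i) := by
      intro i; rw [hHq i]; ring
    rw [tsum_congr step2, tsum_mul_left]
    congr 1
    have hs1 : Summable (fun i => vecPow g H n i * (∑' j, H i j) - vecPow g H n i) :=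
      (hsumrow n).sub (hP n).2
    rw [Summable.tsum_add hs1 (haq n), Summable.tsum_sub (hsumrow n) (hP n).2, hs_rec n]
  -- summabilities of s and a
  have hs_sum1 : Summable (fun n => s (n + 1)) := hμfin
  have hs_sum : Summable s := (summable_nat_add_iff 1).mp hs_sum1
  have ha_le : ∀ n, a n ≤ s n := by
    intro n
    refine Summable.tsum_le_tsum ?_ (haq n) (hP n).2
    intro j
    calc vecPow g H n j * q j ≤ vecPow g H n j * 1 :=
          mul_le_mul_of_nonneg_left (hq1' j) ((hP n).1 j)
      _ = vecPow g H n j := mul_one _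
  have ha_nn : ∀ n, 0 ≤ a n := fun n => tsum_nonneg fun j => mul_nonneg ((hP n).1 j) (hqnn j)
  have ha_sum : Summable a := hs_sum.of_nonneg_of_le ha_nn ha_le
  have ha_sum1 : Summable (fun n => a (n + 1)) := (summable_nat_add_iff 1).mpr ha_sum
  -- values at 0
  have hs0 : s 0 = 1 := hg1
  have ha0 : a 0 = (1 + m - ρ) / m := hgq
  -- solve for T := ∑' n, a (n+1)
  set T : ℝ := ∑' n, a (n + 1) with hT_def
  have hAT : ∑' n, a n = a 0 + T := Summable.tsum_eq_zero_add ha_sum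
  have hST : ∑' n, s n = s 0 + ∑' n, s (n + 1) := Summable.tsum_eq_zero_add hs_sum
  have hTeq : T = ρ * (T + a 0 - s 0) := by
    have hss : Summable (fun n => s (n + 1) - s n) := hs_sum1.sub hs_sum
    have h1 : ∑' n, s (n + 1) = (∑' n, s n) - s 0 := by linarith [hST]
    have h2 : T = ρ * (((∑' n, s n) - s 0 - ∑' n, s n) + ∑' n, a n) := by
      rw [hT_def, tsum_congr fun n => ha_rec n, tsum_mul_left,
        Summable.tsum_add hss ha_sum, Summable.tsum_sub hs_sum1 hs_sum, h1]
    conv_lhs => rw [h2]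
    rw [hAT]; ring
  have hT : T = ρ / m := by
    rw [hs0, ha0] at hTeq
    have hmne : m ≠ 0 := ne_of_gt hm
    have hd : m * ((1 + m - ρ) / m) = 1 + m - ρ := mul_div_cancel₀ _ hmne
    have hTeq2 : m * T = ρ * (m * T + (1 - ρ)) := by
      calc m * T = m * (ρ * (T + (1 + m - ρ) / m - 1)) := by rw [← hTeq]
        _ = ρ * (m * T + m * ((1 + m - ρ) / m) - m) := by ring
        _ = ρ * (m * T + (1 + m - ρ) - m) := by rw [hd]
        _ = ρ * (m * T + (1 - ρ)) := by ring
    have hkey : (m * T - ρ) * (1 - ρ) = 0 := by linear_combination hTeq2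
    rcases mul_eq_zero.mp hkey with h | h
    · field_simp
      linarith
    · exfalso; linarith
  -- hat identity
  set c : ℝ := m / (1 + m - ρ) with hc_def
  set gh : ℕ → ℝ := fun l => m * g l * q l / (1 + m - ρ) with hgh_def
  set Hh : ℕ → ℕ → ℝ := fun i' j' => H i' j' * q j' / (q i' * ρ) with hHh_def
  have hhat : ∀ n j, vecPow gh Hh n j = (c / ρ ^ n) * (vecPow g H n j * q j) := by
    intro n
    induction n with
    | zero =>
      intro j
      show m * g j * q j / (1 + m - ρ) = (c / ρ ^ 0) * (g j * q j)
      rw [pow_zero, hc_def]; ring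
    | succ k ih =>
      intro j
      show (∑' i, vecPow gh Hh k i * Hh i j) = _
      have term : ∀ i, vecPow gh Hh k i * Hh i j
          = (c / ρ ^ (k + 1) * q j) * (vecPow g H k i * H i j) := by
        intro i
        rw [ih i, hHh_def]
        have hqi : q i ≠ 0 := ne_of_gt (hq0 i)
        field_simp
        ring
      rw [tsum_congr term, tsum_mul_left]
      show _ = (c / ρ ^ (k + 1)) * (vecMat (vecPow g H k) H j * q j)
      simp only [vecMat]
      ring
  -- inner sums
  have hinner : ∀ n : ℕ, ρ ^ (n + 1) * ∑' j, vecPow gh Hh (n + 1) j = c * a (n + 1) := by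
    intro n
    have : (∑' j, vecPow gh Hh (n + 1) j)
        = (c / ρ ^ (n + 1)) * ∑' j, vecPow g H (n + 1) j * q j := by
      rw [tsum_congr (fun j => hhat (n + 1) j), tsum_mul_left]
    rw [this]
    have hpow : (ρ : ℝ) ^ (n + 1) ≠ 0 := pow_ne_zero _ hρne
    field_simp
    rfl
  calc (1 + m - ρ) / ρ * ∑' n : ℕ, ρ ^ (n + 1) * ∑' j, vecPow gh Hh (n + 1) j
      = (1 + m - ρ) / ρ * ∑' n : ℕ, c * a (n + 1) := by
        rw [tsum_congr fun n => hinner n]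
    _ = (1 + m - ρ) / ρ * (c * T) := by rw [tsum_mul_left]
    _ = 1 := by
        rw [hT, hc_def]
        field_simp
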